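/- Let a > 0 be real, let δ_1,…,δ_L be positive reals, and let η_1,…,η_R be nonnegative reals with Σ_{j=1}^{R} η_j = R. Then Σ_{j=1}^{R} Σ_{i=1}^{L} η_j·δ_i/(1 + a·η_j·δ_i) ≤ R · Σ_{i=1}^{L} δ_i/(1 + a·δ_i). (Hence, since a spatial correlation matrix has unit diagonal and thus trace R, the optimal centralized LMMSE MSE never exceeds the localized LMMSE MSE, with equality when all η_j = 1, i.e., spatially uncorrelated antennas.) -/

import Mathlib

lemma tangent_key (a t d : ℝ) (ha : 0 < a) (hd : 0 < d) (ht : 0 ≤ t) :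
    t * d / (1 + a * (t * d)) ≤ d / (1 + a * d) + d / (1 + a * d) ^ 2 * (t - 1) := by
  have h1 : 0 < 1 + a * d := by positivity
  have h2 : 0 < 1 + a * (t * d) := by positivity
  rw [div_le_iff₀ h2]
  have e : d / (1 + a * d) + d / (1 + a * d) ^ 2 * (t - 1)
      = (d * (1 + a * d) + d * (t - 1)) / (1 + a * d) ^ 2 := by
    field_simp
  rw [e, div_mul_eq_mul_div, le_div_iff₀ (by positivity)]
  nlinarith [sq_nonneg (1 + a * d), mul_pos hd h1,
    mul_nonneg (mul_nonneg ha.le hd.le) (sq_nonneg (t - 1))]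

theorem olmmse_le_llmmse {L Rdim : ℕ} (a : ℝ) (ha : 0 < a)
    (δ : Fin L → ℝ) (hδ : ∀ i, 0 < δ i)
    (η : Fin Rdim → ℝ) (hη : ∀ j, 0 ≤ η j) (hsum : ∑ j, η j = (Rdim : ℝ)) :
    ∑ j, ∑ i, η j * δ i / (1 + a * (η j * δ i))
      ≤ (Rdim : ℝ) * ∑ i, δ i / (1 + a * δ i) := by
  set SA := ∑ i, δ i / (1 + a * δ i) with hSA
  set SB := ∑ i, δ i / (1 + a * δ i) ^ 2 with hSB
  have step : ∑ j, ∑ i, η j * δ i / (1 + a * (η j * δ i))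
      ≤ ∑ j, (SA + SB * (η j - 1)) := by
    refine Finset.sum_le_sum fun j _ => ?_
    rw [hSA, hSB, Finset.sum_mul, ← Finset.sum_add_distrib]
    exact Finset.sum_le_sum fun i _ => tangent_key a (η j) (δ i) ha (hδ i) (hη j)
  refine step.trans_eq ?_
  rw [Finset.sum_add_distrib, ← Finset.mul_sum, Finset.sum_sub_distrib, hsum]
  simp [mul_comm]
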